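/- Let G be a countable group, d : ℕ → ℕ, and α_m : G → U(d m) maps such that for all g, h ∈ G, ‖α_m(gh) − α_m(g)α_m(h)‖ → 0 as m → ∞. Suppose g ∈ G satisfies limsup_m ‖α_m(g) − 1‖ > 0. Then there exist e : ℕ → ℕ and maps β_m : G → U(e m) such that for all q, h ∈ G, ‖β_m(qh) − β_m(q)β_m(h)‖ → 0 as m → ∞, and limsup_m ‖β_m(g) − 1‖ ≥ √2. -/

import Mathlib

open Filter

/-- The operator norm (as operators on `ℂⁿ` with the `ℓ²` norm) of a complex matrix. -/
noncomputable def matOpNorm {N : Type*} [Fintype N] [DecidableEq N]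
    (A : Matrix N N ℂ) : ℝ :=
  ‖Matrix.toEuclideanCLM (𝕜 := ℂ) (n := N) A‖

/-- A sequence of maps `αₘ : G → U(d m)` is an asymptotic representation if
`‖αₘ(gh) − αₘ(g)αₘ(h)‖ → 0` for all `g h : G`. -/
def IsAsymptoticRep {G : Type*} [Group G] (d : ℕ → ℕ)
    (α : ∀ m : ℕ, G → Matrix.unitaryGroup (Fin (d m)) ℂ) : Prop :=
  ∀ g h : G,
    Tendsto (fun m : ℕ =>
      matOpNorm ((α m (g * h) : Matrix (Fin (d m)) (Fin (d m)) ℂ) -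
        (α m g : Matrix (Fin (d m)) (Fin (d m)) ℂ) *
        (α m h : Matrix (Fin (d m)) (Fin (d m)) ℂ)))
      atTop (nhds 0)

/-- A group is MF if it admits an asymptotic representation `(αₘ)` such that, for every
`g ≠ 1`, `‖αₘ(g) − 1‖` does not converge to `0`. -/
def IsMFGroup (G : Type*) [Group G] : Prop :=
  ∃ (d : ℕ → ℕ) (α : ∀ m : ℕ, G → Matrix.unitaryGroup (Fin (d m)) ℂ),
    IsAsymptoticRep d α ∧
    ∀ g : G, g ≠ 1 →
      ¬ Tendsto (fun m : ℕ =>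
          matOpNorm ((α m g : Matrix (Fin (d m)) (Fin (d m)) ℂ) - 1))
        atTop (nhds 0)

/-! ### Auxiliary material -/

set_option maxHeartbeats 1000000
set_option linter.unusedSectionVars false

open Matrix
open scoped Matrix.Norms.L2Operator Kronecker

section NormLemmas

variable {N M : Type*} [Fintype N] [DecidableEq N] [Fintype M] [DecidableEq M]

lemma matOpNorm_def' (A : Matrix N N ℂ) : matOpNorm A = ‖A‖ := rfl

lemma euclid_norm_sq (x : N → ℂ) :
    ‖(EuclideanSpace.equiv N ℂ).symm x‖ ^ 2 = ∑ i, ‖x i‖ ^ 2 := by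
  rw [EuclideanSpace.norm_eq, Real.sq_sqrt (by positivity)]
  rfl

lemma opNorm_le_of_sq (A : Matrix N N ℂ) {c : ℝ} (hc : 0 ≤ c)
    (h : ∀ x : N → ℂ, ∑ i, ‖(A *ᵥ x) i‖ ^ 2 ≤ c ^ 2 * ∑ i, ‖x i‖ ^ 2) :
    ‖A‖ ≤ c := by
  rw [Matrix.l2_opNorm_def]
  apply ContinuousLinearMap.opNorm_le_bound _ hc
  intro x
  have h1 : ((toEuclideanLin ≪≫ₗ LinearMap.toContinuousLinearMap) A) x
      = (EuclideanSpace.equiv N ℂ).symm (A *ᵥ (EuclideanSpace.equiv N ℂ x)) := rfl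
  rw [h1]
  have h2 : ‖x‖ = ‖(EuclideanSpace.equiv N ℂ).symm (EuclideanSpace.equiv N ℂ x)‖ := rfl
  rw [h2]
  set y := EuclideanSpace.equiv N ℂ x with hy
  have := h y
  have hn1 := euclid_norm_sq (A *ᵥ y)
  have hn2 := euclid_norm_sq y
  nlinarith [norm_nonneg ((EuclideanSpace.equiv N ℂ).symm (A *ᵥ y)),
    norm_nonneg ((EuclideanSpace.equiv N ℂ).symm y),
    mul_nonneg hc (norm_nonneg ((EuclideanSpace.equiv N ℂ).symm y))]

lemma sq_le_opNorm (A : Matrix N N ℂ) (x : N → ℂ) :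
    ∑ i, ‖(A *ᵥ x) i‖ ^ 2 ≤ ‖A‖ ^ 2 * ∑ i, ‖x i‖ ^ 2 := by
  have this1 := Matrix.l2_opNorm_mulVec A ((EuclideanSpace.equiv N ℂ).symm x)
  have this2 : ‖(EuclideanSpace.equiv N ℂ).symm (A *ᵥ x)‖
      ≤ ‖A‖ * ‖(EuclideanSpace.equiv N ℂ).symm x‖ := this1
  have hn1 := euclid_norm_sq (A *ᵥ x)
  have hn2 := euclid_norm_sq x
  nlinarith [norm_nonneg ((EuclideanSpace.equiv N ℂ).symm (A *ᵥ x)), norm_nonneg A,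
    norm_nonneg ((EuclideanSpace.equiv N ℂ).symm x)]

lemma opNorm_one_le : ‖(1 : Matrix N N ℂ)‖ ≤ 1 := by
  apply opNorm_le_of_sq _ zero_le_one
  intro x
  simp [Matrix.one_mulVec]

lemma opNorm_unitary_le (u : Matrix N N ℂ) (hu : u ∈ Matrix.unitaryGroup N ℂ) :
    ‖u‖ ≤ 1 := by
  have h1 : ‖uᴴ * u‖ = ‖u‖ * ‖u‖ := Matrix.l2_opNorm_conjTranspose_mul_self u
  have h2 : uᴴ * u = 1 := by
    have := Matrix.mem_unitaryGroup_iff'.mp hu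
    rwa [Matrix.star_eq_conjTranspose] at this
  rw [h2] at h1
  nlinarith [norm_nonneg u, opNorm_one_le (N := N)]

lemma opNorm_unitary_sub_one_le (u : Matrix N N ℂ) (hu : u ∈ Matrix.unitaryGroup N ℂ) :
    ‖u - 1‖ ≤ 2 := by
  calc ‖u - 1‖ ≤ ‖u‖ + ‖(1 : Matrix N N ℂ)‖ := norm_sub_le _ _
  _ ≤ 1 + 1 := add_le_add (opNorm_unitary_le u hu) opNorm_one_le
  _ = 2 := by norm_num

lemma reindex_mulVec (e : N ≃ M) (A : Matrix N N ℂ) (x : M → ℂ) (i : M) :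
    ((Matrix.reindex e e A) *ᵥ x) i = (A *ᵥ (x ∘ e)) (e.symm i) := by
  simp only [Matrix.reindex_apply, Matrix.mulVec, Matrix.submatrix_apply, dotProduct]
  exact Fintype.sum_equiv e.symm _ _ fun j => by simp

lemma opNorm_reindex_le (e : N ≃ M) (A : Matrix N N ℂ) :
    ‖Matrix.reindex e e A‖ ≤ ‖A‖ := by
  apply opNorm_le_of_sq _ (norm_nonneg A)
  intro x
  have h1 : ∑ i, ‖((Matrix.reindex e e A) *ᵥ x) i‖ ^ 2
      = ∑ i, ‖(A *ᵥ (x ∘ e)) i‖ ^ 2 := by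
    rw [← Equiv.sum_comp e.symm (fun i => ‖(A *ᵥ (x ∘ e)) i‖ ^ 2)]
    exact Finset.sum_congr rfl fun i _ => by rw [reindex_mulVec]
  have h2 : ∑ i, ‖x i‖ ^ 2 = ∑ i, ‖(x ∘ e) i‖ ^ 2 :=
    (Equiv.sum_comp e (fun i => ‖x i‖ ^ 2)).symm
  rw [h1, h2]
  exact sq_le_opNorm A (x ∘ e)

lemma opNorm_reindex (e : N ≃ M) (A : Matrix N N ℂ) :
    ‖Matrix.reindex e e A‖ = ‖A‖ := by
  refine le_antisymm (opNorm_reindex_le e A) ?_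
  have := opNorm_reindex_le e.symm (Matrix.reindex e e A)
  simpa using this

lemma opNorm_fromBlocks_le (A : Matrix N N ℂ) (B : Matrix M M ℂ) :
    ‖Matrix.fromBlocks A 0 0 B‖ ≤ max ‖A‖ ‖B‖ := by
  apply opNorm_le_of_sq _ (le_max_of_le_left (norm_nonneg A))
  intro x
  rw [Matrix.fromBlocks_mulVec]
  simp only [Matrix.zero_mulVec, add_zero, zero_add]
  rw [Fintype.sum_sum_type, Fintype.sum_sum_type]
  simp only [Sum.elim_inl, Sum.elim_inr]
  have hA := sq_le_opNorm A (fun i => x (Sum.inl i))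
  have hB := sq_le_opNorm B (fun i => x (Sum.inr i))
  have h1 : ‖A‖ ^ 2 ≤ max ‖A‖ ‖B‖ ^ 2 := by
    apply pow_le_pow_left₀ (norm_nonneg A) (le_max_left _ _)
  have h2 : ‖B‖ ^ 2 ≤ max ‖A‖ ‖B‖ ^ 2 := by
    apply pow_le_pow_left₀ (norm_nonneg B) (le_max_right _ _)
  have s1 : (0:ℝ) ≤ ∑ i, ‖x (Sum.inl i)‖ ^ 2 := by positivity
  have s2 : (0:ℝ) ≤ ∑ i, ‖x (Sum.inr i)‖ ^ 2 := by positivity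
  have e1 : (x ∘ Sum.inl) = (fun i => x (Sum.inl i)) := rfl
  have e2 : (x ∘ Sum.inr) = (fun i => x (Sum.inr i)) := rfl
  rw [e1, e2, mul_add]
  refine le_trans (add_le_add hA hB) ?_
  exact add_le_add (mul_le_mul_of_nonneg_right h1 s1) (mul_le_mul_of_nonneg_right h2 s2)

lemma opNorm_le_fromBlocks_left (A : Matrix N N ℂ) (B : Matrix M M ℂ) :
    ‖A‖ ≤ ‖Matrix.fromBlocks A 0 0 B‖ := by
  apply opNorm_le_of_sq _ (norm_nonneg _)
  intro x
  have := sq_le_opNorm (Matrix.fromBlocks A 0 0 B) (Sum.elim x 0)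
  rw [Matrix.fromBlocks_mulVec] at this
  simp only [Matrix.zero_mulVec, add_zero, zero_add] at this
  rw [Fintype.sum_sum_type, Fintype.sum_sum_type] at this
  simp only [Sum.elim_inl, Sum.elim_inr] at this
  have hz : (Sum.elim x (0 : M → ℂ)) ∘ Sum.inl = x := rfl
  have hz2 : (Sum.elim x (0 : M → ℂ)) ∘ Sum.inr = (0 : M → ℂ) := rfl
  rw [hz, hz2] at this
  simp only [Matrix.mulVec_zero, Pi.zero_apply, norm_zero] at this
  simpa using this

lemma opNorm_le_fromBlocks_right (A : Matrix N N ℂ) (B : Matrix M M ℂ) :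
    ‖B‖ ≤ ‖Matrix.fromBlocks A 0 0 B‖ := by
  apply opNorm_le_of_sq _ (norm_nonneg _)
  intro x
  have := sq_le_opNorm (Matrix.fromBlocks A 0 0 B) (Sum.elim 0 x)
  rw [Matrix.fromBlocks_mulVec] at this
  simp only [Matrix.zero_mulVec, add_zero, zero_add] at this
  rw [Fintype.sum_sum_type, Fintype.sum_sum_type] at this
  simp only [Sum.elim_inl, Sum.elim_inr] at this
  have hz : (Sum.elim (0 : N → ℂ) x) ∘ Sum.inr = x := rfl
  have hz2 : (Sum.elim (0 : N → ℂ) x) ∘ Sum.inl = (0 : N → ℂ) := rfl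
  rw [hz, hz2] at this
  simp only [Matrix.mulVec_zero, Pi.zero_apply, norm_zero] at this
  simpa using this

lemma abs_eigenvalue_le_opNorm (A : Matrix N N ℂ) {μ : ℂ} {x : N → ℂ}
    (hx : x ≠ 0) (h : A *ᵥ x = μ • x) : ‖μ‖ ≤ ‖A‖ := by
  have hsum : 0 < ∑ i, ‖x i‖ ^ 2 := by
    obtain ⟨i, hi⟩ := Function.ne_iff.mp hx
    apply Finset.sum_pos' (fun j _ => by positivity)
    exact ⟨i, Finset.mem_univ i, by simpa [sq_pos_iff] using hi⟩
  have h2 := sq_le_opNorm A x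
  rw [h] at h2
  simp only [Pi.smul_apply, norm_smul, smul_eq_mul, norm_mul, mul_pow] at h2
  rw [← Finset.mul_sum] at h2
  have h3 : ‖μ‖ ^ 2 ≤ ‖A‖ ^ 2 := le_of_mul_le_mul_right (by simpa using h2) hsum
  nlinarith [norm_nonneg μ, norm_nonneg A]

lemma kron_mulVec (A : Matrix N N ℂ) (B : Matrix M M ℂ) (v : N × M → ℂ) (p : N × M) :
    ((A ⊗ₖ B) *ᵥ v) p = (A *ᵥ (fun k => (B *ᵥ (fun l => v (k, l))) p.2)) p.1 := by
  simp only [Matrix.mulVec, dotProduct, Matrix.kroneckerMap_apply]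
  rw [Fintype.sum_prod_type]
  refine Finset.sum_congr rfl fun k _ => ?_
  rw [Finset.mul_sum]
  exact Finset.sum_congr rfl fun l _ => by ring

lemma kron_mulVec_pure (A : Matrix N N ℂ) (B : Matrix M M ℂ) (x : N → ℂ) (y : M → ℂ) :
    (A ⊗ₖ B) *ᵥ (fun p => x p.1 * y p.2) = fun p => (A *ᵥ x) p.1 * (B *ᵥ y) p.2 := by
  ext p
  rw [kron_mulVec]
  simp only [Matrix.mulVec, dotProduct]
  rw [Finset.sum_mul]
  refine Finset.sum_congr rfl fun k _ => ?_
  rw [Finset.mul_sum, Finset.mul_sum]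
  exact Finset.sum_congr rfl fun l _ => by ring

lemma opNorm_kron_le (A : Matrix N N ℂ) (B : Matrix M M ℂ) :
    ‖A ⊗ₖ B‖ ≤ ‖A‖ * ‖B‖ := by
  apply opNorm_le_of_sq _ (mul_nonneg (norm_nonneg A) (norm_nonneg B))
  intro v
  have key : ∀ p : N × M, ((A ⊗ₖ B) *ᵥ v) p
      = (A *ᵥ (fun k => (B *ᵥ (fun l => v (k, l))) p.2)) p.1 := kron_mulVec A B v
  calc ∑ p : N × M, ‖((A ⊗ₖ B) *ᵥ v) p‖ ^ 2
      = ∑ j : M, ∑ i : N, ‖(A *ᵥ (fun k => (B *ᵥ (fun l => v (k, l))) j)) i‖ ^ 2 := by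
        rw [Fintype.sum_prod_type, Finset.sum_comm]
        exact Finset.sum_congr rfl fun j _ => Finset.sum_congr rfl fun i _ => by
          rw [key (i, j)]
    _ ≤ ∑ j : M, ‖A‖ ^ 2 * ∑ k : N, ‖(B *ᵥ (fun l => v (k, l))) j‖ ^ 2 := by
        exact Finset.sum_le_sum fun j _ => sq_le_opNorm A _
    _ = ‖A‖ ^ 2 * ∑ k : N, ∑ j : M, ‖(B *ᵥ (fun l => v (k, l))) j‖ ^ 2 := by
        rw [← Finset.mul_sum, Finset.sum_comm]
    _ ≤ ‖A‖ ^ 2 * ∑ k : N, (‖B‖ ^ 2 * ∑ l : M, ‖v (k, l)‖ ^ 2) := by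
        apply mul_le_mul_of_nonneg_left _ (by positivity)
        exact Finset.sum_le_sum fun k _ => sq_le_opNorm B _
    _ = (‖A‖ * ‖B‖) ^ 2 * ∑ p : N × M, ‖v p‖ ^ 2 := by
        rw [Fintype.sum_prod_type, ← Finset.mul_sum]
        ring

lemma conjTranspose_kron (A : Matrix N N ℂ) (B : Matrix M M ℂ) :
    (A ⊗ₖ B)ᴴ = Aᴴ ⊗ₖ Bᴴ := by
  ext p q
  simp [Matrix.conjTranspose_apply, Matrix.kroneckerMap_apply]

lemma kron_mem_unitary {A : Matrix N N ℂ} {B : Matrix M M ℂ}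
    (hA : A ∈ Matrix.unitaryGroup N ℂ) (hB : B ∈ Matrix.unitaryGroup M ℂ) :
    A ⊗ₖ B ∈ Matrix.unitaryGroup (N × M) ℂ := by
  rw [Matrix.mem_unitaryGroup_iff] at hA hB ⊢
  rw [Matrix.star_eq_conjTranspose] at hA hB ⊢
  rw [conjTranspose_kron, ← Matrix.mul_kronecker_mul, hA, hB, Matrix.one_kronecker_one]

lemma fromBlocks_mem_unitary {A : Matrix N N ℂ} {B : Matrix M M ℂ}
    (hA : A ∈ Matrix.unitaryGroup N ℂ) (hB : B ∈ Matrix.unitaryGroup M ℂ) :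
    Matrix.fromBlocks A 0 0 B ∈ Matrix.unitaryGroup (N ⊕ M) ℂ := by
  rw [Matrix.mem_unitaryGroup_iff] at hA hB ⊢
  rw [Matrix.star_eq_conjTranspose] at hA hB ⊢
  rw [Matrix.fromBlocks_conjTranspose, Matrix.fromBlocks_multiply]
  simp [hA, hB, Matrix.fromBlocks_one]

lemma reindex_mem_unitary (e : N ≃ M) {A : Matrix N N ℂ}
    (hA : A ∈ Matrix.unitaryGroup N ℂ) :
    Matrix.reindex e e A ∈ Matrix.unitaryGroup M ℂ := by
  rw [Matrix.mem_unitaryGroup_iff] at hA ⊢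
  rw [Matrix.star_eq_conjTranspose] at hA ⊢
  rw [Matrix.conjTranspose_reindex]
  rw [Matrix.reindex_apply, Matrix.reindex_apply, Matrix.submatrix_mul_equiv, hA]
  simp

lemma reindex_mul (e : N ≃ M) (A B : Matrix N N ℂ) :
    (Matrix.reindex e e A) * (Matrix.reindex e e B) = Matrix.reindex e e (A * B) := by
  rw [Matrix.reindex_apply, Matrix.reindex_apply, Matrix.reindex_apply,
    Matrix.submatrix_mul_equiv]

lemma reindex_one (e : N ≃ M) :
    Matrix.reindex e e (1 : Matrix N N ℂ) = 1 := by
  rw [Matrix.reindex_apply]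
  exact Matrix.submatrix_one_equiv e.symm

lemma reindex_sub (e : N ≃ M) (A B : Matrix N N ℂ) :
    Matrix.reindex e e A - Matrix.reindex e e B = Matrix.reindex e e (A - B) := by
  ext i j
  simp [Matrix.reindex_apply, Matrix.submatrix_apply, Matrix.sub_apply]

end NormLemmas

section Spectral

variable {N : Type*} [Fintype N] [DecidableEq N]

noncomputable instance matCStarAlgebra : CStarAlgebra (Matrix N N ℂ) where

lemma unitary_eigen (u : Matrix N N ℂ) (hu : u ∈ Matrix.unitaryGroup N ℂ)
    (hpos : 0 < ‖u - 1‖) :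
    ∃ (lam : ℂ) (x : N → ℂ), x ≠ 0 ∧ u *ᵥ x = lam • x ∧ ‖lam‖ = 1 ∧
      ‖lam - 1‖ = ‖u - 1‖ := by
  haveI : Nontrivial (Matrix N N ℂ) := by
    refine nontrivial_of_ne (u - 1) 0 fun h => ?_
    rw [h] at hpos; simp at hpos
  have hnormal : IsStarNormal (u - 1) := by
    constructor
    have h1 : star u * u = 1 := Unitary.star_mul_self_of_mem hu
    have h2 : u * star u = 1 := Unitary.mul_star_self_of_mem hu
    simp only [star_sub, star_one, Commute, SemiconjBy, mul_sub, sub_mul, h1, h2,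
      mul_one, one_mul]
    abel
  have hrad : spectralRadius ℂ (u - 1) = ‖u - 1‖₊ :=
    IsStarNormal.spectralRadius_eq_nnnorm (u - 1)
  obtain ⟨z, hz, hznorm⟩ := spectrum.exists_nnnorm_eq_spectralRadius (a := u - 1)
  rw [hrad] at hznorm
  have hzn : ‖z‖ = ‖u - 1‖ := by
    have := ENNReal.coe_injective hznorm
    exact congrArg NNReal.toReal this
  set lam := z + 1 with hlam
  have hmem : lam ∈ spectrum ℂ u := by
    rw [spectrum.mem_iff] at hz ⊢
    intro hunit
    apply hz
    convert hunit using 1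
    simp only [hlam, Algebra.algebraMap_eq_smul_one, add_smul, one_smul]
    abel
  have habs : ‖lam‖ = 1 := by
    have := spectrum.subset_circle_of_unitary hu hmem
    simpa [Metric.mem_sphere] using this
  have hdet : (lam • (1 : Matrix N N ℂ) - u).det = 0 := by
    rw [spectrum.mem_iff] at hmem
    by_contra hne
    apply hmem
    rw [Algebra.algebraMap_eq_smul_one]
    rw [Matrix.isUnit_iff_isUnit_det]
    exact isUnit_iff_ne_zero.mpr hne
  obtain ⟨x, hx0, hxv⟩ := (Matrix.exists_mulVec_eq_zero_iff).mpr hdet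
  refine ⟨lam, x, hx0, ?_, habs, by simpa [hlam] using hzn⟩
  have hexp : (lam • (1 : Matrix N N ℂ) - u) *ᵥ x = lam • x - u *ᵥ x := by
    rw [Matrix.sub_mulVec, Matrix.smul_mulVec, Matrix.one_mulVec]
  rw [hexp] at hxv
  have := sub_eq_zero.mp hxv
  exact this.symm

end Spectral

section BlockAmp

variable {N M : Type*} [Fintype N] [DecidableEq N] [Fintype M] [DecidableEq M]

lemma fromBlocks_sub' (A A' : Matrix N N ℂ) (B B' : Matrix M M ℂ) :
    Matrix.fromBlocks A 0 0 B - Matrix.fromBlocks A' 0 0 B'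
      = Matrix.fromBlocks (A - A') 0 0 (B - B') := by
  ext i j
  rcases i with i | i <;> rcases j with j | j <;>
    simp [Matrix.fromBlocks, Matrix.sub_apply]

lemma sub_kron (A B : Matrix N N ℂ) (C : Matrix M M ℂ) :
    (A - B) ⊗ₖ C = A ⊗ₖ C - B ⊗ₖ C := by
  ext p q
  simp [Matrix.kroneckerMap_apply, sub_mul]

lemma kron_sub (C : Matrix N N ℂ) (A B : Matrix M M ℂ) :
    C ⊗ₖ (A - B) = C ⊗ₖ A - C ⊗ₖ B := by
  ext p q
  simp [Matrix.kroneckerMap_apply, mul_sub]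

/-- the block amplification `u ⊕ (u ⊗ u)`. -/
noncomputable def blockAmp (u : Matrix N N ℂ) : Matrix (N ⊕ N × N) (N ⊕ N × N) ℂ :=
  Matrix.fromBlocks u 0 0 (u ⊗ₖ u)

lemma blockAmp_mem_unitary {u : Matrix N N ℂ} (hu : u ∈ Matrix.unitaryGroup N ℂ) :
    blockAmp u ∈ Matrix.unitaryGroup (N ⊕ N × N) ℂ :=
  fromBlocks_mem_unitary hu (kron_mem_unitary hu hu)

lemma blockAmp_mul_err {a b c : Matrix N N ℂ} (ha : a ∈ Matrix.unitaryGroup N ℂ)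
    (hb : b ∈ Matrix.unitaryGroup N ℂ) (hc : c ∈ Matrix.unitaryGroup N ℂ) :
    ‖blockAmp a - blockAmp b * blockAmp c‖ ≤ 3 * ‖a - b * c‖ := by
  have hbc : b * c ∈ Matrix.unitaryGroup N ℂ := mul_mem hb hc
  have hmul : blockAmp b * blockAmp c = blockAmp (b * c) := by
    unfold blockAmp
    rw [Matrix.fromBlocks_multiply]
    simp [Matrix.mul_kronecker_mul]
  rw [hmul]
  have hsub : blockAmp a - blockAmp (b * c)
      = Matrix.fromBlocks (a - b * c) 0 0 (a ⊗ₖ a - (b * c) ⊗ₖ (b * c)) := by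
    unfold blockAmp
    rw [fromBlocks_sub']
  rw [hsub]
  set d := b * c with hd
  set ε := ‖a - d‖ with hε
  have hε0 : 0 ≤ ε := norm_nonneg _
  have hkron : ‖a ⊗ₖ a - d ⊗ₖ d‖ ≤ 2 * ε := by
    have hid : a ⊗ₖ a - d ⊗ₖ d = (a - d) ⊗ₖ a + d ⊗ₖ (a - d) := by
      rw [sub_kron, kron_sub]
      abel
    rw [hid]
    calc ‖(a - d) ⊗ₖ a + d ⊗ₖ (a - d)‖ ≤ ‖(a - d) ⊗ₖ a‖ + ‖d ⊗ₖ (a - d)‖ := norm_add_le _ _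
      _ ≤ ‖a - d‖ * ‖a‖ + ‖d‖ * ‖a - d‖ :=
          add_le_add (opNorm_kron_le _ _) (opNorm_kron_le _ _)
      _ ≤ ε * 1 + 1 * ε := by
          apply add_le_add
          · exact mul_le_mul_of_nonneg_left (opNorm_unitary_le a ha) hε0
          · exact mul_le_mul_of_nonneg_right (opNorm_unitary_le d hbc) hε0
      _ = 2 * ε := by ring
  calc ‖Matrix.fromBlocks (a - d) 0 0 (a ⊗ₖ a - d ⊗ₖ d)‖
      ≤ max ‖a - d‖ ‖a ⊗ₖ a - d ⊗ₖ d‖ := opNorm_fromBlocks_le _ _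
    _ ≤ 3 * ε := by
        apply max_le (by linarith)
        linarith

lemma blockAmp_lower {u : Matrix N N ℂ} (hu : u ∈ Matrix.unitaryGroup N ℂ) :
    min (Real.sqrt 2) (Real.sqrt 2 * ‖u - 1‖) ≤ ‖blockAmp u - 1‖ := by
  set t := ‖u - 1‖ with ht
  have ht0 : 0 ≤ t := norm_nonneg _
  have hsub : blockAmp u - 1 = Matrix.fromBlocks (u - 1) 0 0 (u ⊗ₖ u - 1) := by
    unfold blockAmp
    rw [← Matrix.fromBlocks_one, fromBlocks_sub']
  rcases eq_or_lt_of_le ht0 with h0 | hpos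
  · have : min (Real.sqrt 2) (Real.sqrt 2 * t) ≤ 0 := by
      rw [← h0]
      simp
    exact this.trans (norm_nonneg _)
  rcases le_or_gt (Real.sqrt 2) t with hbig | hsmall
  · refine le_trans (min_le_left _ _) (le_trans hbig ?_)
    rw [hsub]
    exact opNorm_le_fromBlocks_left _ _
  · -- t < √2 : use eigenvalue doubling
    obtain ⟨lam, x, hx0, heig, hlam1, hlamt⟩ := unitary_eigen u hu hpos
    have hv0 : (fun p : N × N => x p.1 * x p.2) ≠ 0 := by
      obtain ⟨i, hi⟩ := Function.ne_iff.mp hx0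
      intro hcon
      apply hi
      have := congrFun hcon (i, i)
      simp only [Pi.zero_apply] at this
      exact mul_self_eq_zero.mp this
    have heig2 : (u ⊗ₖ u - 1) *ᵥ (fun p : N × N => x p.1 * x p.2)
        = (lam ^ 2 - 1) • (fun p : N × N => x p.1 * x p.2) := by
      rw [Matrix.sub_mulVec, Matrix.one_mulVec, kron_mulVec_pure, heig]
      ext p
      simp only [Pi.smul_apply, Pi.sub_apply, smul_eq_mul]
      ring
    have hlow : ‖lam ^ 2 - 1‖ ≤ ‖u ⊗ₖ u - 1‖ :=
      abs_eigenvalue_le_opNorm _ hv0 heig2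
    have hfactor : ‖lam ^ 2 - 1‖ = ‖lam - 1‖ * ‖lam + 1‖ := by
      rw [← norm_mul]
      congr 1
      ring
    have hplus : ‖lam + 1‖ ^ 2 = 4 - t ^ 2 := by
      have e1 : ‖lam‖ ^ 2 = 1 := by rw [hlam1]; norm_num
      have e2 : ‖lam - 1‖ ^ 2 = t ^ 2 := by rw [hlamt]
      have q1 : ‖lam‖ ^ 2 = lam.re ^ 2 + lam.im ^ 2 := by
        rw [Complex.sq_norm, Complex.normSq_apply]; ring
      have q2 : ‖lam - 1‖ ^ 2 = (lam.re - 1) ^ 2 + lam.im ^ 2 := by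
        rw [Complex.sq_norm, Complex.normSq_apply]
        simp [Complex.sub_re, Complex.sub_im]
        ring
      have q3 : ‖lam + 1‖ ^ 2 = (lam.re + 1) ^ 2 + lam.im ^ 2 := by
        rw [Complex.sq_norm, Complex.normSq_apply]
        simp [Complex.add_re, Complex.add_im]
        ring
      nlinarith [q1, q2, q3, e1, e2]
    have hsq2 : Real.sqrt 2 * t ≤ ‖lam ^ 2 - 1‖ := by
      have h2 : (Real.sqrt 2) ^ 2 = 2 := Real.sq_sqrt (by norm_num)
      have ht2 : t ^ 2 ≤ 2 := by
        nlinarith [Real.sqrt_nonneg 2]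
      have hprod : ‖lam ^ 2 - 1‖ ^ 2 = t ^ 2 * (4 - t ^ 2) := by
        rw [hfactor, mul_pow, hlamt, hplus]
      have hge : (Real.sqrt 2 * t) ^ 2 ≤ ‖lam ^ 2 - 1‖ ^ 2 := by
        rw [hprod, mul_pow, h2]
        nlinarith
      have hrt : 0 ≤ Real.sqrt 2 * t := mul_nonneg (Real.sqrt_nonneg 2) ht0
      nlinarith [norm_nonneg (lam ^ 2 - 1)]
    refine le_trans (min_le_right _ _) (le_trans hsq2 (le_trans hlow ?_))
    rw [hsub]
    exact opNorm_le_fromBlocks_right _ _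

end BlockAmp

section Amplify

/-- dimension of the amplified representation -/
def ampDim (n : ℕ) : ℕ := n + n * n

def ampEquiv (n : ℕ) : (Fin n ⊕ Fin n × Fin n) ≃ Fin (ampDim n) :=
  (Equiv.sumCongr (Equiv.refl (Fin n)) finProdFinEquiv).trans finSumFinEquiv

/-- amplification of a unitary -/
noncomputable def amp {n : ℕ} (u : Matrix.unitaryGroup (Fin n) ℂ) :
    Matrix.unitaryGroup (Fin (ampDim n)) ℂ :=
  ⟨Matrix.reindex (ampEquiv n) (ampEquiv n) (blockAmp (u : Matrix (Fin n) (Fin n) ℂ)),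
    reindex_mem_unitary _ (blockAmp_mem_unitary u.2)⟩

lemma amp_err {n : ℕ} (a b c : Matrix.unitaryGroup (Fin n) ℂ) :
    ‖(amp a : Matrix (Fin (ampDim n)) (Fin (ampDim n)) ℂ) - (amp b : Matrix _ _ ℂ) * (amp c : Matrix _ _ ℂ)‖
      ≤ 3 * ‖(a : Matrix (Fin n) (Fin n) ℂ) - (b : Matrix _ _ ℂ) * (c : Matrix _ _ ℂ)‖ := by
  show ‖Matrix.reindex (ampEquiv n) (ampEquiv n) (blockAmp _)
      - Matrix.reindex (ampEquiv n) (ampEquiv n) (blockAmp _) * Matrix.reindex (ampEquiv n) (ampEquiv n) (blockAmp _)‖ ≤ _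
  rw [reindex_mul, reindex_sub, opNorm_reindex]
  exact blockAmp_mul_err a.2 b.2 c.2

lemma amp_lower {n : ℕ} (u : Matrix.unitaryGroup (Fin n) ℂ) :
    min (Real.sqrt 2) (Real.sqrt 2 * ‖(u : Matrix (Fin n) (Fin n) ℂ) - 1‖)
      ≤ ‖(amp u : Matrix (Fin (ampDim n)) (Fin (ampDim n)) ℂ) - 1‖ := by
  show _ ≤ ‖Matrix.reindex (ampEquiv n) (ampEquiv n) (blockAmp (u : Matrix (Fin n) (Fin n) ℂ)) - 1‖
  have hone : Matrix.reindex (ampEquiv n) (ampEquiv n) (blockAmp (u : Matrix (Fin n) (Fin n) ℂ)) - 1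
      = Matrix.reindex (ampEquiv n) (ampEquiv n) (blockAmp (u : Matrix (Fin n) (Fin n) ℂ) - 1) := by
    rw [← reindex_sub, reindex_one]
  rw [hone, opNorm_reindex]
  exact blockAmp_lower u.2

variable {G : Type*} [Group G]

/-- bundled representation sequence -/
structure RepSeq (G : Type*) [Group G] where
  dim : ℕ → ℕ
  mat : ∀ m : ℕ, G → Matrix.unitaryGroup (Fin (dim m)) ℂ

/-- iterated amplification -/
noncomputable def iterRep (R : RepSeq G) : ℕ → RepSeq G
  | 0 => R
  | k + 1 => ⟨fun m => ampDim ((iterRep R k).dim m),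
      fun m h => amp ((iterRep R k).mat m h)⟩

/-- multiplicativity error -/
noncomputable def errSeq (R : RepSeq G) (q h : G) (m : ℕ) : ℝ :=
  matOpNorm ((R.mat m (q * h) : Matrix (Fin (R.dim m)) (Fin (R.dim m)) ℂ) -
    (R.mat m q : Matrix (Fin (R.dim m)) (Fin (R.dim m)) ℂ) *
    (R.mat m h : Matrix (Fin (R.dim m)) (Fin (R.dim m)) ℂ))

/-- distance from the identity -/
noncomputable def gval (R : RepSeq G) (g : G) (m : ℕ) : ℝ :=
  matOpNorm ((R.mat m g : Matrix (Fin (R.dim m)) (Fin (R.dim m)) ℂ) - 1)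

lemma isAsymptoticRep_iff (R : RepSeq G) :
    IsAsymptoticRep R.dim R.mat ↔ ∀ q h : G, Tendsto (errSeq R q h) atTop (nhds 0) :=
  Iff.rfl

lemma iterRep_asymptotic (R : RepSeq G) (hR : IsAsymptoticRep R.dim R.mat) (k : ℕ) :
    IsAsymptoticRep (iterRep R k).dim (iterRep R k).mat := by
  induction k with
  | zero => exact hR
  | succ k ih =>
    rw [isAsymptoticRep_iff]
    intro q h
    have key : ∀ m, errSeq (iterRep R (k+1)) q h m ≤ 3 * errSeq (iterRep R k) q h m := by
      intro m
      unfold errSeq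
      rw [matOpNorm_def', matOpNorm_def']
      exact amp_err _ _ _
    have hnn : ∀ m, 0 ≤ errSeq (iterRep R (k+1)) q h m := by
      intro m
      unfold errSeq
      rw [matOpNorm_def']
      exact norm_nonneg _
    have h3 : Tendsto (fun m => 3 * errSeq (iterRep R k) q h m) atTop (nhds 0) := by
      have := ((isAsymptoticRep_iff _).mp ih q h).const_mul (3 : ℝ)
      simpa using this
    exact squeeze_zero hnn key h3

/-- the amplification function on norms -/
noncomputable def phi (t : ℝ) : ℝ := min (Real.sqrt 2) (Real.sqrt 2 * t)

lemma phi_mono : Monotone phi := by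
  intro s t hst
  unfold phi
  exact min_le_min le_rfl (by nlinarith [Real.sqrt_nonneg 2])

lemma iterRep_lower (R : RepSeq G) (g : G) (k : ℕ) (m : ℕ) :
    phi^[k] (gval R g m) ≤ gval (iterRep R k) g m := by
  induction k with
  | zero => simp [iterRep]
  | succ k ih =>
    rw [Function.iterate_succ_apply']
    calc phi (phi^[k] (gval R g m)) ≤ phi (gval (iterRep R k) g m) := phi_mono ih
      _ ≤ gval (iterRep R (k+1)) g m := by
          unfold gval phi
          rw [matOpNorm_def', matOpNorm_def']
          exact amp_lower _

lemma phi_iter_lower (c : ℝ) (hc : 0 ≤ c) (k : ℕ) :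
    min (Real.sqrt 2) (Real.sqrt 2 ^ k * c) ≤ phi^[k] c := by
  induction k with
  | zero => simp
  | succ k ih =>
    rw [Function.iterate_succ_apply']
    calc min (Real.sqrt 2) (Real.sqrt 2 ^ (k+1) * c)
        ≤ phi (min (Real.sqrt 2) (Real.sqrt 2 ^ k * c)) := by
          unfold phi
          rcases le_total (Real.sqrt 2) (Real.sqrt 2 ^ k * c) with h | h
          · rw [min_eq_left h]
            refine le_min (min_le_left _ _) ?_
            refine le_trans (min_le_left _ _) ?_
            nlinarith [Real.sqrt_nonneg 2, Real.sq_sqrt (show (0:ℝ) ≤ 2 by norm_num),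
              Real.one_le_sqrt.mpr (show (1:ℝ) ≤ 2 by norm_num)]
          · rw [min_eq_right h]
            refine le_min (min_le_left _ _) ?_
            refine le_trans (min_le_right _ _) ?_
            rw [pow_succ]
            nlinarith [Real.sqrt_nonneg 2, pow_nonneg (Real.sqrt_nonneg 2) k]
      _ ≤ phi (phi^[k] c) := phi_mono ih

end Amplify

theorem stmt4 (G : Type*) [Group G] [Countable G]
    (d : ℕ → ℕ) (α : ∀ m : ℕ, G → Matrix.unitaryGroup (Fin (d m)) ℂ)
    (hα : IsAsymptoticRep d α) (g : G)
    (hg : 0 < Filter.limsup (fun m : ℕ =>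
        matOpNorm ((α m g : Matrix (Fin (d m)) (Fin (d m)) ℂ) - 1)) atTop) :
    ∃ (e : ℕ → ℕ) (β : ∀ m : ℕ, G → Matrix.unitaryGroup (Fin (e m)) ℂ),
      IsAsymptoticRep e β ∧
      Real.sqrt 2 ≤ Filter.limsup (fun m : ℕ =>
        matOpNorm ((β m g : Matrix (Fin (e m)) (Fin (e m)) ℂ) - 1)) atTop := by
  set R : RepSeq G := ⟨d, α⟩ with hR
  have hg' : 0 < Filter.limsup (gval R g) atTop := hg
  set L := Filter.limsup (gval R g) atTop with hL
  set c₀ := L / 2 with hc₀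
  have hc₀pos : 0 < c₀ := by positivity
  have hc₀lt : c₀ < L := by linarith
  have hsqrt2 : (1 : ℝ) < Real.sqrt 2 := by
    nlinarith [Real.sq_sqrt (show (0:ℝ) ≤ 2 by norm_num), Real.sqrt_nonneg 2]
  obtain ⟨K, hK⟩ := pow_unbounded_of_one_lt (Real.sqrt 2 / c₀) hsqrt2
  have hK' : Real.sqrt 2 ≤ Real.sqrt 2 ^ K * c₀ := by
    rw [div_lt_iff₀ hc₀pos] at hK
    linarith
  refine ⟨(iterRep R K).dim, (iterRep R K).mat, iterRep_asymptotic R hα K, ?_⟩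
  have hgoal : Real.sqrt 2 ≤ Filter.limsup (gval (iterRep R K) g) atTop := by
    have hbound : IsBoundedUnder (· ≤ ·) atTop (gval (iterRep R K) g) := by
      refine isBoundedUnder_of ⟨2, fun m => ?_⟩
      unfold gval
      rw [matOpNorm_def']
      exact opNorm_unitary_sub_one_le _ (((iterRep R K).mat m g).2)
    have hb0' : IsBoundedUnder (· ≥ ·) atTop (gval R g) := by
      refine isBoundedUnder_of ⟨0, fun m => ?_⟩
      unfold gval
      rw [matOpNorm_def']
      exact norm_nonneg _
    have hfreq : ∃ᶠ m in atTop, c₀ < gval R g m :=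
      frequently_lt_of_lt_limsup hb0'.isCoboundedUnder_le hc₀lt
    refine le_limsup_of_frequently_le (hfreq.mono fun m hm => ?_) hbound
    calc Real.sqrt 2 = min (Real.sqrt 2) (Real.sqrt 2 ^ K * c₀) := (min_eq_left hK').symm
      _ ≤ phi^[K] c₀ := phi_iter_lower c₀ hc₀pos.le K
      _ ≤ phi^[K] (gval R g m) := phi_mono.iterate K hm.le
      _ ≤ gval (iterRep R K) g m := iterRep_lower R g K m
  exact hgoal
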